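/- Let n be a natural number and let W be an arbitrary subset of (Fin n → ℂ). Write 𝟙 for the constant function with value 1. If α : Fin n → ℂ satisfies that for every t ∈ ℂ the point (fun i => Complex.exp (t * α i)) belongs to W, then α belongs to the tangent cone tangentConeAt ℂ W 𝟙 of W at 𝟙. In particular, the exponential tangent cone ETC₁(W) is contained in tangentConeAt ℂ W 𝟙. (Lemma 2.4(i) of the paper.) -/

import Mathlib

open Filter Topology

lemma key_limit (a : ℂ) :
    Tendsto (fun k : ℕ => (k : ℂ) * (Complex.exp ((k : ℂ)⁻¹ * a) - 1)) atTop (𝓝 a) := by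
  have h1 : HasDerivAt (fun t : ℂ => t * a) a 0 := hasDerivAt_mul_const a
  have h2 : HasDerivAt (fun t : ℂ => Complex.exp (t * a)) a 0 := by
    have := (Complex.hasDerivAt_exp ((0 : ℂ) * a)).comp 0 h1
    simpa [Function.comp_def] using this
  have hslope := hasDerivAt_iff_tendsto_slope.mp h2
  have hinv : Tendsto (fun k : ℕ => ((k : ℂ))⁻¹) atTop (𝓝[≠] (0 : ℂ)) := by
    apply tendsto_nhdsWithin_of_tendsto_nhds_of_eventually_within
    · rw [tendsto_zero_iff_norm_tendsto_zero]
      have : Tendsto (fun k : ℕ => ((k : ℝ))⁻¹) atTop (𝓝 0) :=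
        tendsto_inv_atTop_zero.comp tendsto_natCast_atTop_atTop
      simpa using this
    · filter_upwards [eventually_gt_atTop 0] with k hk
      simp [Set.mem_setOf_eq, (Nat.cast_ne_zero (R := ℂ)).mpr hk.ne']
  have := hslope.comp hinv
  apply this.congr'
  filter_upwards [eventually_gt_atTop 0] with k hk
  have hk' : ((k : ℂ)) ≠ 0 := (Nat.cast_ne_zero (R := ℂ)).mpr hk.ne'
  simp [slope, Function.comp, div_eq_mul_inv, inv_inv, mul_comm, hk']

/-- Lemma 2.4(i): the exponential tangent cone is contained in the tangent cone at `𝟙`. -/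
theorem exponential_tangent_cone_subset_tangentCone
    (n : ℕ) (W : Set (Fin n → ℂ)) (α : Fin n → ℂ)
    (hα : ∀ t : ℂ, (fun i => Complex.exp (t * α i)) ∈ W) :
    α ∈ tangentConeAt ℂ W (fun _ => (1 : ℂ)) := by
  rw [mem_tangentConeAt_iff_exists_seq_norm_tendsto_atTop]
  refine ⟨fun k => (k : ℂ), fun k i => Complex.exp ((k : ℂ)⁻¹ * α i) - 1, ?_, ?_, ?_⟩
  swap
  · filter_upwards with k
    have := hα ((k : ℂ)⁻¹)
    convert this using 1
    funext i
    simp [Pi.add_apply]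
  · have : Tendsto (fun k : ℕ => ((k : ℝ))) atTop atTop := tendsto_natCast_atTop_atTop
    simpa [Complex.norm_natCast] using this
  · rw [tendsto_pi_nhds]
    intro i
    simpa [Pi.smul_apply, smul_eq_mul] using key_limit (α i)
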